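/- Consider a one-layer ReLU network with weight matrix W, compact input uncertainty set X, preactivation bounds l ≤ 0 ≤ u valid on X with l < u componentwise, and cost vector c. Assume there exists x* ∈ X such that (x*, z̃*) is optimal for the LP relaxation f̂*(X; l, u) and (x*, z*) with z* = ReLU(Wx*) is optimal for the unrelaxed problem f*(X). Then the relaxation error satisfies f̂*(X; l, u) − f*(X) ≤ −Σ_{i=1}^{n_z} max(c_i, 0) · u_i l_i/(u_i − l_i). -/
import Mathlib


open Finset Matrix

noncomputable section

/-- Membership of `(x, z)` in the relaxed ReLU network constraint set `N(W, l, u)`. -/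
def InRelax {nx nz : ℕ} (W : Matrix (Fin nz) (Fin nx) ℝ) (l u : Fin nz → ℝ)
    (x : Fin nx → ℝ) (z : Fin nz → ℝ) : Prop :=
  ∀ i, 0 ≤ z i ∧ W.mulVec x i ≤ z i ∧
    z i ≤ u i * (W.mulVec x i - l i) / (u i - l i)

/-- Values `cᵀ ReLU(Wx)` of the true network over `X`. -/
def trueVals {nx nz : ℕ} (W : Matrix (Fin nz) (Fin nx) ℝ) (c : Fin nz → ℝ)
    (X : Set (Fin nx → ℝ)) : Set ℝ :=
  {v | ∃ x ∈ X, v = ∑ i, c i * max (W.mulVec x i) 0}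

/-- Values `cᵀ z` over the LP relaxation feasible set. -/
def hatVals {nx nz : ℕ} (W : Matrix (Fin nz) (Fin nx) ℝ) (c : Fin nz → ℝ)
    (X : Set (Fin nx → ℝ)) (l u : Fin nz → ℝ) : Set ℝ :=
  {v | ∃ x z, x ∈ X ∧ InRelax W l u x z ∧ v = ∑ i, c i * z i}

/-- worst-case relaxation bound: if some `x* ∈ X` is simultaneously
optimal for the LP relaxation `f̂*(X; l, u)` (with certificate `z̃*`) and for the
unrelaxed problem `f*(X)` (with `z* = ReLU(Wx*)`), then
`f̂*(X; l, u) − f*(X) ≤ −Σᵢ max(cᵢ, 0) · uᵢ lᵢ/(uᵢ − lᵢ)`. -/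
theorem worst_case_relaxation_bound {nx nz : ℕ}
    (W : Matrix (Fin nz) (Fin nx) ℝ) (c : Fin nz → ℝ)
    (X : Set (Fin nx → ℝ)) (l u : Fin nz → ℝ)
    (hsign : ∀ i, l i ≤ 0 ∧ 0 ≤ u i ∧ l i < u i)
    (hvalid : ∀ x ∈ X, ∀ i, l i ≤ W.mulVec x i ∧ W.mulVec x i ≤ u i)
    (fstar fhat : ℝ)
    (hfstar : IsGreatest (trueVals W c X) fstar)
    (hfhat : IsGreatest (hatVals W c X l u) fhat)
    (xstar : Fin nx → ℝ) (hxstar : xstar ∈ X)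
    (ztilde : Fin nz → ℝ) (hztilde : InRelax W l u xstar ztilde)
    (hopt_relaxed : ∑ i, c i * ztilde i = fhat)
    (hopt_true : ∑ i, c i * max (W.mulVec xstar i) 0 = fstar) :
    fhat - fstar ≤ -∑ i, max (c i) 0 * (u i * l i) / (u i - l i) := by
  have key : ∀ i, c i * ztilde i - c i * max (W.mulVec xstar i) 0 ≤
      -(max (c i) 0 * (u i * l i) / (u i - l i)) := by
    intro i
    obtain ⟨hl0, hu0, hlu⟩ := hsign i
    obtain ⟨hz0, hzW, hzU⟩ := hztilde i
    set y := W.mulVec xstar i with hy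
    have hul : 0 < u i - l i := by linarith
    rcases le_or_gt (c i) 0 with hc | hc
    · have hcm : max (c i) 0 = 0 := max_eq_right hc
      have h1 : max y 0 ≤ ztilde i := max_le hzW hz0
      have h2 : c i * ztilde i - c i * max y 0 ≤ 0 := by nlinarith
      rw [hcm]
      simpa using h2
    · have hcm : max (c i) 0 = c i := max_eq_left hc.le
      have hub : u i * y ≤ max y 0 * (u i - l i) := by
        rcases le_or_gt y 0 with hy0 | hy0
        · have h : max y 0 = 0 := max_eq_right hy0
          nlinarith
        · have h : max y 0 = y := max_eq_left hy0.le
          nlinarith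
      have hz' : ztilde i * (u i - l i) ≤ u i * (y - l i) := by
        rw [← le_div_iff₀ hul]; exact hzU
      rw [hcm, ← neg_div, le_div_iff₀ hul]
      nlinarith
  calc fhat - fstar = ∑ i, (c i * ztilde i - c i * max (W.mulVec xstar i) 0) := by
        rw [Finset.sum_sub_distrib, hopt_relaxed, hopt_true]
    _ ≤ ∑ i, -(max (c i) 0 * (u i * l i) / (u i - l i)) :=
        Finset.sum_le_sum fun i _ => key i
    _ = -∑ i, max (c i) 0 * (u i * l i) / (u i - l i) := by
        rw [← Finset.sum_neg_distrib]
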